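/- If G is a Hausdorff topological group that is uniformly NSS, then G is locally uniform: there exist a symmetric open neighborhood U of the identity and a uniformity 𝓤 on G inducing the topology of G such that the multiplication map (x,y) ↦ x·y : U²×U² → G is uniformly continuous with respect to 𝓤. -/

import Mathlib

open Filter Set Topology Pointwise

/-- The neighborhood `U` of the identity is uniformly free from small subgroups: for every
neighborhood `V` of the identity there is `n` such that every `x ∉ V` has `x ^ k ∉ U` for some
`1 ≤ k ≤ n`. -/
def UniformlyFreeFSS {G : Type*} [Group G] [TopologicalSpace G] (U : Set G) : Prop :=
  ∀ V ∈ 𝓝 (1 : G), ∃ n : ℕ, ∀ x : G, x ∉ V → ∃ k : ℕ, 1 ≤ k ∧ k ≤ n ∧ x ^ k ∉ U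

/-- A topological group is uniformly NSS if some neighborhood of the identity is uniformly free
from small subgroups. -/
def UNSS (G : Type*) [Group G] [TopologicalSpace G] : Prop :=
  ∃ U ∈ 𝓝 (1 : G), UniformlyFreeFSS U

/-- The product of a uniformity-like filter on `G × G` with itself, as a filter on
`(G × G) × (G × G)`; this agrees with the product uniformity when the filter is a uniformity. -/
def prodUF {G : Type*} (F : Filter (G × G)) : Filter ((G × G) × (G × G)) :=
  Filter.comap (fun q : (G × G) × (G × G) => (q.1.1, q.2.1)) F ⊓
    Filter.comap (fun q : (G × G) × (G × G) => (q.1.2, q.2.2)) F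

/-- Multiplication is uniformly continuous on the set `s ⊆ G × G` with respect to the
uniformity-like filter `F` on `G × G`. -/
def MulUCOn {G : Type*} [Mul G] (F : Filter (G × G)) (s : Set (G × G)) : Prop :=
  Filter.Tendsto (fun q : (G × G) × (G × G) => (q.1.1 * q.1.2, q.2.1 * q.2.2))
    (prodUF F ⊓ 𝓟 (s ×ˢ s)) F

/-- For every neighborhood `S` of `1` and every `n`, there is a neighborhood `W` of `1`
with `W ^ n ⊆ S`. -/
theorem aux_exists_nhds_pow {G : Type*} [Group G] [TopologicalSpace G] [IsTopologicalGroup G] :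
    ∀ (n : ℕ) (S : Set G), S ∈ 𝓝 (1 : G) → ∃ W ∈ 𝓝 (1 : G), W ^ n ⊆ S := by
  intro n
  induction n with
  | zero =>
    intro S hS
    refine ⟨S, hS, ?_⟩
    simp only [pow_zero]
    intro x hx
    rw [Set.mem_one] at hx
    subst hx
    exact mem_of_mem_nhds hS
  | succ n ih =>
    intro S hS
    obtain ⟨T, hT, hTT⟩ := exists_nhds_one_split hS
    obtain ⟨W, hW, hWn⟩ := ih T hT
    refine ⟨W ∩ T, inter_mem hW hT, ?_⟩
    rw [pow_succ]
    rintro x ⟨a, ha, b, hb, rfl⟩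
    exact hTT _ (hWn (Set.pow_subset_pow_left (inter_subset_left) ha)) _ hb.2

theorem stmt_10 {G : Type*} [Group G] [TopologicalSpace G] [IsTopologicalGroup G] [T2Space G]
    (h : UNSS G) :
    ∃ U : Set G, IsOpen U ∧ (1 : G) ∈ U ∧ U⁻¹ = U ∧
      ∃ u : UniformSpace G, u.toTopologicalSpace = ‹TopologicalSpace G› ∧
        MulUCOn (@uniformity G u) ((U ^ 2) ×ˢ (U ^ 2)) := by
  obtain ⟨U₀, hU₀, hFSS⟩ := h
  -- a small symmetric open neighborhood U with U ^ 8 ⊆ U₀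
  obtain ⟨V, Vo, hV1, hVpow⟩ : ∃ V : Set G, IsOpen V ∧ (1 : G) ∈ V ∧ V ^ 8 ⊆ U₀ := by
    obtain ⟨W, hW, hW8⟩ := aux_exists_nhds_pow 8 U₀ hU₀
    obtain ⟨V, Vo, hV1, hVsub⟩ := mem_nhds_iff.1 hW
    exact ⟨V, hV1, hVsub, (Set.pow_subset_pow_left Vo).trans hW8⟩
  set U : Set G := V ∩ V⁻¹ with hUdef
  have Uo : IsOpen U := Vo.inter Vo.inv
  have hU1 : (1 : G) ∈ U := ⟨hV1, by simpa using hV1⟩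
  have hUsymm : U⁻¹ = U := by
    rw [hUdef, Set.inter_inv, inv_inv, Set.inter_comm]
  have hUV : U ⊆ V := inter_subset_left
  have hUnhds : U ∈ 𝓝 (1 : G) := Uo.mem_nhds hU1
  -- products of ≤ 8 elements of U land in U₀
  have hU5 : ∀ a b c d e : G, a ∈ U → b ∈ U → c ∈ U → d ∈ U → e ∈ U →
      a * b * c * d * e ∈ U₀ := by
    intro a b c d e ha hb hc hd he
    have h1 : (1 : G) ∈ V := hV1
    have : a * b * c * d * e = a * b * c * d * e * 1 * 1 * 1 := by group
    rw [this]
    apply hVpow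
    have mem : ∀ x y : Set G, ∀ u v : G, u ∈ x → v ∈ y → u * v ∈ x * y := by
      intro x y u v hu hv; exact Set.mul_mem_mul hu hv
    have h2 : a * b ∈ V ^ 2 := by rw [sq]; exact mem _ _ _ _ (hUV ha) (hUV hb)
    have h3 : a * b * c ∈ V ^ 3 := by rw [pow_succ]; exact mem _ _ _ _ h2 (hUV hc)
    have h4 : a * b * c * d ∈ V ^ 4 := by rw [pow_succ]; exact mem _ _ _ _ h3 (hUV hd)
    have h5 : a * b * c * d * e ∈ V ^ 5 := by rw [pow_succ]; exact mem _ _ _ _ h4 (hUV he)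
    have h6 : a * b * c * d * e * 1 ∈ V ^ 6 := by rw [pow_succ]; exact mem _ _ _ _ h5 h1
    have h7 : a * b * c * d * e * 1 * 1 ∈ V ^ 7 := by rw [pow_succ]; exact mem _ _ _ _ h6 h1
    rw [pow_succ]; exact mem _ _ _ _ h7 h1
  -- conjugation lemma: conjugation by elements of U ^ 2 is equicontinuous at 1
  have conj_lemma : ∀ Vn ∈ 𝓝 (1 : G), ∃ W ∈ 𝓝 (1 : G),
      ∀ g ∈ U ^ 2, ∀ x ∈ W, g * x * g⁻¹ ∈ Vn := by
    intro Vn hVn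
    obtain ⟨n, hn⟩ := hFSS Vn hVn
    obtain ⟨W₀, hW₀, hW₀n⟩ := aux_exists_nhds_pow n U hUnhds
    refine ⟨W₀ ∩ U, inter_mem hW₀ hUnhds, ?_⟩
    intro g hg x hx
    have hxW := hx.1
    have hxU := hx.2
    by_contra hcon
    obtain ⟨k, hk1, hkn, hknotin⟩ := hn _ hcon
    apply hknotin
    rw [conj_pow]
    -- x ^ k ∈ U
    have hxk : x ^ k ∈ U := by
      have h1W : (1 : G) ∈ W₀ ∩ U := ⟨mem_of_mem_nhds hW₀, hU1⟩
      have : x ^ k ∈ (W₀ ∩ U) ^ k := Set.pow_mem_pow hx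
      have hsub : (W₀ ∩ U) ^ k ⊆ W₀ ^ n :=
        (Set.pow_subset_pow_right h1W hkn).trans
          (Set.pow_subset_pow_left inter_subset_left)
      exact hW₀n (hsub this)
    rw [sq] at hg
    obtain ⟨a, ha, b, hb, rfl⟩ := hg
    have hainv : a⁻¹ ∈ U := by rw [← hUsymm]; simpa using ha
    have hbinv : b⁻¹ ∈ U := by rw [← hUsymm]; simpa using hb
    have : a * b * x ^ k * (a * b)⁻¹ = a * b * x ^ k * b⁻¹ * a⁻¹ := by group
    rw [this]
    exact hU5 _ _ _ _ _ ha hb hxk hbinv hainv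
  -- the uniform space: the right uniformity
  refine ⟨U, Uo, hU1, hUsymm, IsTopologicalGroup.rightUniformSpace G, rfl, ?_⟩
  -- unfold uniform continuity of multiplication
  rw [MulUCOn]
  intro T hT
  rw [Filter.mem_map]
  have hfun : (fun p : G × G => p.2 / p.1) = fun p => p.2 * p.1⁻¹ :=
    funext fun p => div_eq_mul_inv _ _
  have hTu : T ∈ Filter.comap (fun p : G × G => p.2 / p.1) (𝓝 (1 : G)) := by rw [hfun]; exact hT
  obtain ⟨Vn, hVn, hVnT⟩ := hTu
  obtain ⟨V', hV', hV'mul⟩ := exists_nhds_one_split hVn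
  obtain ⟨W, hW, hWconj⟩ := conj_lemma V' hV'
  -- the candidate entourage
  have hA : (fun q : (G × G) × (G × G) => (q.1.1, q.2.1)) ⁻¹'
      ((fun p : G × G => p.2 / p.1) ⁻¹' V') ∈ prodUF (@uniformity G (IsTopologicalGroup.rightUniformSpace G)) :=
    by rw [hfun]; exact Filter.mem_inf_of_left (Filter.preimage_mem_comap (Filter.preimage_mem_comap hV'))
  have hB : (fun q : (G × G) × (G × G) => (q.1.2, q.2.2)) ⁻¹'
      ((fun p : G × G => p.2 / p.1) ⁻¹' W) ∈ prodUF (@uniformity G (IsTopologicalGroup.rightUniformSpace G)) :=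
    by rw [hfun]; exact Filter.mem_inf_of_right (Filter.preimage_mem_comap (Filter.preimage_mem_comap hW))
  refine Filter.mem_of_superset
    (Filter.inter_mem (Filter.mem_inf_of_left (Filter.inter_mem hA hB))
      (Filter.mem_inf_of_right (Filter.mem_principal_self _))) ?_
  rintro ⟨⟨x₁, x₂⟩, ⟨y₁, y₂⟩⟩ ⟨⟨hA', hB'⟩, hs⟩
  simp only [Set.mem_preimage] at hA' hB'
  apply hVnT
  simp only [Set.mem_preimage]
  -- y₁ ∈ U ^ 2
  have hy₁ : y₁ ∈ U ^ 2 := (Set.mem_prod.1 hs.2).1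
  have hconj : y₁ * (y₂ / x₂) * y₁⁻¹ ∈ V' := hWconj _ hy₁ _ hB'
  have key : y₁ * y₂ / (x₁ * x₂) = (y₁ * (y₂ / x₂) * y₁⁻¹) * (y₁ / x₁) := by
    simp only [div_eq_mul_inv, mul_inv_rev, mul_assoc, inv_mul_cancel_left]
  rw [key]
  exact hV'mul _ hconj _ hA'
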